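/- arXiv:math/0508308 — 3 statements merged into one kernel-verified Lean document; each statement's English description precedes it below -/
import Mathlib

section
/- Let R be a commutative ring and x a variable over R. Let 0 ≤ a₁ < a₂ < ⋯ < a_p be integers, and for each 1 ≤ k ≤ p let J_k be an ideal of R, with J_k^e denoting the extension J_k·R[x]. Then in R[x] one has the equality of ideals: x^{a₁}J₁^e + x^{a₂}J₂^e + ⋯ + x^{a_p}J_p^e = x^{a₁}·((J₁^e + (x^{a₂−a₁})) ∩ (J₁^e + J₂^e + (x^{a₃−a₁})) ∩ ⋯ ∩ (J₁^e + ⋯ + J_{p−1}^e + (x^{a_p−a₁})) ∩ (J₁^e + ⋯ + J_p^e)). -/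
open Polynomial

private lemma map_C_sum' {R : Type*} [CommRing R] (s : Finset ℕ) (J : ℕ → Ideal R) :
    (∑ i ∈ s, J i).map (C : R →+* R[X]) = ∑ i ∈ s, (J i).map C := by
  classical
  induction s using Finset.induction with
  | empty => simp
  | insert _ _ h ih =>
    rw [Finset.sum_insert h, Finset.sum_insert h, ← ih, Ideal.add_eq_sup,
      Ideal.add_eq_sup, Ideal.map_sup]

private lemma main0 {R : Type*} [CommRing R] (p : ℕ)
    (b : ℕ → ℕ) (hb0 : b 0 = 0) (hb : ∀ i j, i ≤ j → j < p → b i ≤ b j)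
    (J : ℕ → Ideal R) :
    (∑ k ∈ Finset.range p,
        Ideal.span {(X : R[X]) ^ b k} * (J k).map (C : R →+* R[X]))
      = ((Finset.Ico 1 p).inf fun k =>
            (∑ i ∈ Finset.range k, (J i).map (C : R →+* R[X]))
              + Ideal.span {(X : R[X]) ^ b k})
          ⊓ ∑ i ∈ Finset.range p, (J i).map (C : R →+* R[X]) := by
  classical
  apply le_antisymm
  · rw [Ideal.sum_eq_sup, Finset.sup_le_iff]
    intro k hk
    rw [Finset.mem_range] at hk
    refine le_inf ?_ ?_
    · rw [Finset.le_inf_iff]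
      intro m hm
      rw [Finset.mem_Ico] at hm
      rcases le_or_gt m k with h | h
      · calc Ideal.span {(X : R[X]) ^ b k} * (J k).map (C : R →+* R[X])
            ≤ Ideal.span {(X : R[X]) ^ b k} := Ideal.mul_le_left
          _ ≤ Ideal.span {(X : R[X]) ^ b m} := by
              rw [Ideal.span_singleton_le_span_singleton]
              exact pow_dvd_pow _ (hb m k h hk)
          _ ≤ _ := le_sup_right
      · calc Ideal.span {(X : R[X]) ^ b k} * (J k).map (C : R →+* R[X])
            ≤ (J k).map (C : R →+* R[X]) := Ideal.mul_le_right
          _ ≤ ∑ i ∈ Finset.range m, (J i).map (C : R →+* R[X]) := by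
              rw [Ideal.sum_eq_sup]
              exact Finset.le_sup (f := fun i => (J i).map (C : R →+* R[X])) (Finset.mem_range.mpr h)
          _ ≤ _ := le_sup_left
    · calc Ideal.span {(X : R[X]) ^ b k} * (J k).map (C : R →+* R[X])
          ≤ (J k).map (C : R →+* R[X]) := Ideal.mul_le_right
        _ ≤ _ := by
            rw [Ideal.sum_eq_sup]
            exact Finset.le_sup (f := fun i => (J i).map (C : R →+* R[X])) (Finset.mem_range.mpr hk)
  · intro f hf
    obtain ⟨hf1, hf2⟩ := hf
    rw [f.as_sum_support_C_mul_X_pow]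
    apply Ideal.sum_mem
    intro n _
    have key : ∃ m, m ≤ p ∧ (∀ i < m, b i ≤ n) ∧
        f.coeff n ∈ ∑ i ∈ Finset.range m, J i := by
      by_cases hcase : ∃ k, k < p ∧ n < b k
      · set k := Nat.find hcase with hkdef
        have hspec : k < p ∧ n < b k := Nat.find_spec hcase
        have hk1 : 1 ≤ k := by
          rcases Nat.eq_zero_or_pos k with h0 | h0
          · rw [h0, hb0] at hspec; omega
          · exact h0
        have hbi : ∀ i < k, b i ≤ n := by
          intro i hi
          have hmin := Nat.find_min hcase hi
          push_neg at hmin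
          exact hmin (hi.trans hspec.1)
        refine ⟨k, le_of_lt hspec.1, hbi, ?_⟩
        have hmem : f ∈ (∑ i ∈ Finset.range k, (J i).map (C : R →+* R[X]))
            + Ideal.span {(X : R[X]) ^ b k} := by
          exact Submodule.mem_finsetInf.mp hf1 k (Finset.mem_Ico.mpr ⟨hk1, hspec.1⟩)
        rw [Ideal.add_eq_sup, Submodule.mem_sup] at hmem
        obtain ⟨g, hg, h, hh, hgh⟩ := hmem
        have hcoh : h.coeff n = 0 := by
          have := Ideal.mem_span_singleton.mp hh
          exact (Polynomial.X_pow_dvd_iff.mp this) n hspec.2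
        have : f.coeff n = g.coeff n := by
          rw [← hgh, Polynomial.coeff_add, hcoh, add_zero]
        rw [this]
        rw [← map_C_sum', Ideal.mem_map_C_iff] at hg
        exact hg n
      · push_neg at hcase
        refine ⟨p, le_rfl, fun i hi => hcase i hi, ?_⟩
        rw [← map_C_sum'] at hf2
        exact Ideal.mem_map_C_iff.mp hf2 n
    obtain ⟨m, hmp, hbm, hmem⟩ := key
    have h1 : C (f.coeff n) ∈ ∑ i ∈ Finset.range m, (J i).map (C : R →+* R[X]) := by
      rw [← map_C_sum']
      exact Ideal.mem_map_of_mem _ hmem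
    have h2 : (C (f.coeff n) * X ^ n) ∈
        ∑ i ∈ Finset.range m, (J i).map (C : R →+* R[X]) * Ideal.span {(X : R[X]) ^ n} := by
      rw [← Finset.sum_mul]
      exact Ideal.mul_mem_mul h1 (Ideal.subset_span rfl)
    have h3 : (∑ i ∈ Finset.range m, (J i).map (C : R →+* R[X]) * Ideal.span {(X : R[X]) ^ n})
        ≤ ∑ k ∈ Finset.range p,
          Ideal.span {(X : R[X]) ^ b k} * (J k).map (C : R →+* R[X]) := by
      rw [Ideal.sum_eq_sup, Finset.sup_le_iff]
      intro i hi
      rw [Finset.mem_range] at hi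
      calc (J i).map (C : R →+* R[X]) * Ideal.span {(X : R[X]) ^ n}
          ≤ (J i).map (C : R →+* R[X]) * Ideal.span {(X : R[X]) ^ b i} := by
            apply Ideal.mul_mono_right
            rw [Ideal.span_singleton_le_span_singleton]
            exact pow_dvd_pow _ (hbm i hi)
        _ = Ideal.span {(X : R[X]) ^ b i} * (J i).map (C : R →+* R[X]) := mul_comm _ _
        _ ≤ _ := by
            rw [Ideal.sum_eq_sup]
            exact Finset.le_sup
              (f := fun k => Ideal.span {(X : R[X]) ^ b k} * (J k).map (C : R →+* R[X]))
              (Finset.mem_range.mpr (lt_of_lt_of_le hi hmp))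
    exact h3 h2

/-- **Lemma on intersecting ideals in `R[x]`.**
Let `R` be a commutative ring and `x` a variable over `R`. Let
`0 ≤ a₁ < a₂ < ⋯ < a_p` and for each `k` let `J_k` be an ideal of `R`,
with `J_k^e` its extension to `R[x]`.  Then
`x^{a₁}J₁^e + ⋯ + x^{a_p}J_p^e
  = x^{a₁}·((J₁^e + (x^{a₂−a₁})) ∩ ⋯ ∩ (J₁^e + ⋯ + J_{p−1}^e + (x^{a_p−a₁}))
      ∩ (J₁^e + ⋯ + J_p^e))`. -/
theorem intersecting_ideals {R : Type*} [CommRing R] (p : ℕ) (hp : 0 < p)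
    (a : ℕ → ℕ) (ha : ∀ i j, i < j → j < p → a i < a j)
    (J : ℕ → Ideal R) :
    (∑ k ∈ Finset.range p,
        Ideal.span {(X : R[X]) ^ a k} * (J k).map (C : R →+* R[X]))
      = Ideal.span {(X : R[X]) ^ a 0} *
        (((Finset.Ico 1 p).inf fun k =>
            (∑ i ∈ Finset.range k, (J i).map (C : R →+* R[X]))
              + Ideal.span {(X : R[X]) ^ (a k - a 0)})
          ⊓ ∑ i ∈ Finset.range p, (J i).map (C : R →+* R[X])) := by
  have hmono : ∀ i j, i ≤ j → j < p → a i - a 0 ≤ a j - a 0 := by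
    intro i j hij hjp
    rcases eq_or_lt_of_le hij with rfl | h
    · exact le_rfl
    · exact Nat.sub_le_sub_right (ha i j h hjp).le _
  have hsum : (∑ k ∈ Finset.range p,
        Ideal.span {(X : R[X]) ^ a k} * (J k).map (C : R →+* R[X]))
      = Ideal.span {(X : R[X]) ^ a 0} * ∑ k ∈ Finset.range p,
          Ideal.span {(X : R[X]) ^ (a k - a 0)} * (J k).map (C : R →+* R[X]) := by
    rw [Finset.mul_sum]
    apply Finset.sum_congr rfl
    intro k hk
    rw [Finset.mem_range] at hk
    have h0k : a 0 ≤ a k := by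
      rcases Nat.eq_zero_or_pos k with h | h
      · subst h; exact le_rfl
      · exact (ha 0 k h hk).le
    rw [← mul_assoc, Ideal.span_singleton_mul_span_singleton, ← pow_add,
      Nat.add_sub_cancel' h0k]
  rw [hsum]
  congr 1
  exact main0 p (fun k => a k - a 0) (Nat.sub_self _) hmono J
end

section
/- For a saturated homogeneous ideal I ⊆ ℂ[x₀,…,x_n] and integers d with Z_d = Z_{d+1} (the d- and (d+1)-envelopes agree, equivalently the ideals generated by I_d and I_{d+1} have the same saturation), the quotient ideal sheaves on the blowup X = Bl₀(ℂ^{n+1}) satisfy 𝓘'_d = 𝓘'_{d+1}, where 𝓘'_d = (I_d·O_X : O_X(−dE)) and E is the exceptional divisor. Moreover 𝓘'_d ⊆ 𝓘'_{d+1} always, and I_d·O_X = O_X(−dE)·𝓘'_d for every d. -/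
open MvPolynomial

noncomputable section

/-- The irrelevant ideal `(x₀,…,x_n)` of `ℂ[x₀,…,x_n]`. -/
def irrN (n : ℕ) : Ideal (MvPolynomial (Fin (n + 1)) ℂ) :=
  Ideal.span (Set.range (X : Fin (n + 1) → MvPolynomial (Fin (n + 1)) ℂ))

/-- Saturation of a homogeneous ideal with respect to the irrelevant ideal. -/
def satN (n : ℕ) (J : Ideal (MvPolynomial (Fin (n + 1)) ℂ)) :
    Ideal (MvPolynomial (Fin (n + 1)) ℂ) :=
  ⨆ N : ℕ, J.colon ((irrN n ^ N : Ideal (MvPolynomial (Fin (n + 1)) ℂ)) : Set (MvPolynomial (Fin (n + 1)) ℂ))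

/-- The ideal generated by the degree-`d` piece `I_d` of `I`. -/
def pieceSpanN (n : ℕ) (I : Ideal (MvPolynomial (Fin (n + 1)) ℂ)) (d : ℕ) :
    Ideal (MvPolynomial (Fin (n + 1)) ℂ) :=
  Ideal.span {f | f ∈ I ∧ f.IsHomogeneous d}

/-- `d` is a geometric generating degree of `I`: the `d`-envelope differs from the
`(d-1)`-envelope, i.e. the saturations of the ideals generated by `I_d` and `I_{d-1}`
differ. -/
def IsGGDN (n : ℕ) (I : Ideal (MvPolynomial (Fin (n + 1)) ℂ)) (d : ℕ) : Prop :=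
  satN n (pieceSpanN n I d) ≠ satN n (pieceSpanN n I (d - 1))

/-- The zero locus in `ℙⁿ` of a set of (homogeneous) polynomials. -/
def projZeroLocusN (n : ℕ) (T : Set (MvPolynomial (Fin (n + 1)) ℂ)) :
    Set (Projectivization ℂ (Fin (n + 1) → ℂ)) :=
  {p | ∀ f ∈ T, eval p.rep f = 0}

end

noncomputable section

/-- The `m`-th standard coordinate chart of the blowup `Bl₀(ℂ^{n+1})`, as a
ring map on coordinate rings: `x_m ↦ z_m`, `x_i ↦ z_m z_i` for `i ≠ m`.  The
exceptional divisor `E` is cut out by `z_m` in this chart. -/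
def blowChart (n : ℕ) (m : Fin (n + 1)) :
    MvPolynomial (Fin (n + 1)) ℂ →+* MvPolynomial (Fin (n + 1)) ℂ :=
  (aeval fun i : Fin (n + 1) =>
    if i = m then (X m : MvPolynomial (Fin (n + 1)) ℂ) else X m * X i).toRingHom

/-- In the chart, `𝓘'_d = (I_d·O_X : O_X(−dE))` is the colon ideal of the
pullback of `I_d` by `(z_m^d)`. -/
def chartColon (n : ℕ) (m : Fin (n + 1))
    (I : Ideal (MvPolynomial (Fin (n + 1)) ℂ)) (d : ℕ) :
    Ideal (MvPolynomial (Fin (n + 1)) ℂ) :=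
  (Ideal.map (blowChart n m) (pieceSpanN n I d)).colon ((Ideal.span {X m ^ d} : Ideal (MvPolynomial (Fin (n + 1)) ℂ)) :
    Set (MvPolynomial (Fin (n + 1)) ℂ))


/-- dehomogenization at `m` -/
def psiC (n : ℕ) (m : Fin (n + 1)) :
    MvPolynomial (Fin (n + 1)) ℂ →+* MvPolynomial (Fin (n + 1)) ℂ :=
  (aeval fun i : Fin (n + 1) =>
    if i = m then (1 : MvPolynomial (Fin (n + 1)) ℂ) else X i).toRingHom

lemma psiC_X_self (n : ℕ) (m : Fin (n + 1)) : psiC n m (X m) = 1 := by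
  simp [psiC]

lemma scale_aux {n : ℕ} (p : MvPolynomial (Fin (n + 1)) ℂ)
    (h : Fin (n + 1) → MvPolynomial (Fin (n + 1)) ℂ)
    {f : MvPolynomial (Fin (n + 1)) ℂ} {d : ℕ} (hf : f.IsHomogeneous d) :
    aeval (fun i => p * h i) f = p ^ d * aeval h f := by
  conv_lhs => rw [f.as_sum]
  conv_rhs => rw [f.as_sum]
  rw [map_sum, map_sum, Finset.mul_sum]
  refine Finset.sum_congr rfl fun s hs => ?_
  have hdeg : ∑ i ∈ s.support, s i = d := by
    have h1 := hf (mem_support_iff.mp hs)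
    simpa [Finsupp.weight_apply, Finsupp.sum] using h1
  rw [aeval_monomial, aeval_monomial, Finsupp.prod, Finsupp.prod]
  simp_rw [mul_pow]
  rw [Finset.prod_mul_distrib, Finset.prod_pow_eq_pow_sum, hdeg]
  ring

/-- On a homogeneous element of degree `d`, the chart map is `z_m^d` times
dehomogenization. -/
lemma blowChart_homog {n : ℕ} (m : Fin (n + 1))
    {f : MvPolynomial (Fin (n + 1)) ℂ} {d : ℕ} (hf : f.IsHomogeneous d) :
    blowChart n m f = X m ^ d * psiC n m f := by
  have hpt : (fun i : Fin (n + 1) =>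
        if i = m then (X m : MvPolynomial (Fin (n + 1)) ℂ) else X m * X i)
      = fun i => X m * (if i = m then (1 : MvPolynomial (Fin (n + 1)) ℂ) else X i) := by
    funext i
    by_cases h : i = m <;> simp [h]
  show aeval _ f = _
  rw [hpt, scale_aux _ _ hf]
  rfl

lemma psiC_map_pieceSpan_mono {n : ℕ} (m : Fin (n + 1))
    (I : Ideal (MvPolynomial (Fin (n + 1)) ℂ)) (d : ℕ) :
    Ideal.map (psiC n m) (pieceSpanN n I d)
      ≤ Ideal.map (psiC n m) (pieceSpanN n I (d + 1)) := by
  rw [pieceSpanN, Ideal.map_span, Ideal.span_le]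
  rintro y ⟨f, ⟨hfI, hfd⟩, rfl⟩
  have h1 : f * X m ∈ pieceSpanN n I (d + 1) :=
    Ideal.subset_span ⟨I.mul_mem_right _ hfI, hfd.mul (isHomogeneous_X ℂ m)⟩
  have h2 := Ideal.mem_map_of_mem (psiC n m) h1
  rwa [map_mul, psiC_X_self, mul_one] at h2

lemma map_blowChart_eq {n : ℕ} (m : Fin (n + 1))
    (I : Ideal (MvPolynomial (Fin (n + 1)) ℂ)) (d : ℕ) :
    Ideal.map (blowChart n m) (pieceSpanN n I d)
      = Ideal.span {X m ^ d} * Ideal.map (psiC n m) (pieceSpanN n I d) := by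
  rw [pieceSpanN, Ideal.map_span, Ideal.map_span, Ideal.span_mul_span',
    Set.singleton_mul, ← Set.image_comp]
  congr 1
  refine Set.image_congr ?_
  rintro f ⟨hfI, hfd⟩
  exact blowChart_homog m hfd

lemma chartColon_eq {n : ℕ} (m : Fin (n + 1))
    (I : Ideal (MvPolynomial (Fin (n + 1)) ℂ)) (d : ℕ) :
    chartColon n m I d = Ideal.map (psiC n m) (pieceSpanN n I d) := by
  rw [chartColon, map_blowChart_eq]
  ext x
  rw [Ideal.mem_colon_span_singleton]
  constructor
  · intro hx
    rw [Ideal.mem_span_singleton_mul] at hx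
    obtain ⟨z, hz, hzx⟩ := hx
    have hXm : (X m : MvPolynomial (Fin (n + 1)) ℂ) ^ d ≠ 0 :=
      pow_ne_zero _ (X_ne_zero m)
    have : z = x := mul_left_cancel₀ hXm (by rw [hzx, mul_comm])
    rwa [← this]
  · intro hx
    rw [Ideal.mem_span_singleton_mul]
    exact ⟨x, hx, mul_comm _ _⟩

/-- **Properties of the quotient ideal sheaves `𝓘'_d` on `Bl₀(ℂ^{n+1})`,**
verified on each standard chart of the blowup.  For a saturated homogeneous
ideal `I ⊆ ℂ[x₀,…,x_n]`: (1) `I_d·O_X = O_X(−dE)·𝓘'_d` for every `d`;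
(2) `𝓘'_d ⊆ 𝓘'_{d+1}`; (3) if the `d`- and `(d+1)`-envelopes agree (the
ideals generated by `I_d` and `I_{d+1}` have the same saturation), then
`𝓘'_d = 𝓘'_{d+1}`. -/
theorem chart_colon_ideal_properties (n : ℕ)
    (I : Ideal (MvPolynomial (Fin (n + 1)) ℂ))
    (hIh : I = Ideal.span {f | f ∈ I ∧ ∃ k, f.IsHomogeneous k})
    (hsat : satN n I = I) (m : Fin (n + 1)) :
    (∀ d : ℕ, Ideal.map (blowChart n m) (pieceSpanN n I d)
        = Ideal.span {X m ^ d} * chartColon n m I d) ∧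
    (∀ d : ℕ, chartColon n m I d ≤ chartColon n m I (d + 1)) ∧
    (∀ d : ℕ, satN n (pieceSpanN n I d) = satN n (pieceSpanN n I (d + 1)) →
        chartColon n m I d = chartColon n m I (d + 1)) := by
  refine ⟨fun d => ?_, fun d => ?_, fun d h => ?_⟩
  · rw [map_blowChart_eq, chartColon_eq]
  · rw [chartColon_eq, chartColon_eq]
    exact psiC_map_pieceSpan_mono m I d
  · rw [chartColon_eq, chartColon_eq]
    refine le_antisymm (psiC_map_pieceSpan_mono m I d) ?_
    have hps : pieceSpanN n I (d + 1)
        = Ideal.span {f | f ∈ I ∧ f.IsHomogeneous (d + 1)} := rfl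
    rw [hps, Ideal.map_span, Ideal.span_le]
    rintro y ⟨f, ⟨hfI, hfd⟩, rfl⟩
    -- f lies in the saturation of pieceSpanN d
    have hf1 : f ∈ satN n (pieceSpanN n I d) := by
      rw [h]
      refine le_iSup (fun N => (pieceSpanN n I (d + 1)).colon
          ((irrN n ^ N : Ideal (MvPolynomial (Fin (n + 1)) ℂ)) : Set (MvPolynomial (Fin (n + 1)) ℂ))) 0
        (Submodule.mem_colon.mpr fun p _ => ?_)
      have hmem : f ∈ pieceSpanN n I (d + 1) := Ideal.subset_span ⟨hfI, hfd⟩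
      simpa [smul_eq_mul] using Ideal.mul_mem_right p _ hmem
    have hdir : Directed (· ≤ ·) (fun N => (pieceSpanN n I d).colon
        ((irrN n ^ N : Ideal (MvPolynomial (Fin (n + 1)) ℂ)) : Set (MvPolynomial (Fin (n + 1)) ℂ))) := by
      refine Monotone.directed_le fun a b hab => ?_
      exact Submodule.colon_mono le_rfl (SetLike.coe_subset_coe.mpr (Ideal.pow_le_pow_right hab))
    obtain ⟨N, hN⟩ := (Submodule.mem_iSup_of_directed _ hdir).mp hf1
    have hx : (X m : MvPolynomial (Fin (n + 1)) ℂ) ^ N ∈ irrN n ^ N :=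
      Ideal.pow_mem_pow
        (show (X m : MvPolynomial (Fin (n + 1)) ℂ) ∈ irrN n from
          Ideal.subset_span ⟨m, rfl⟩) N
    have hfN : f * X m ^ N ∈ pieceSpanN n I d := by
      simpa [smul_eq_mul] using Submodule.mem_colon.mp hN _ hx
    have h2 := Ideal.mem_map_of_mem (psiC n m) hfN
    rwa [map_mul, map_pow, psiC_X_self, one_pow, mul_one] at h2

end
end

section
/- Let I ⊆ ℂ[x₀,…,x_n] be a saturated homogeneous ideal generated by forms of degrees d₁ < ⋯ < d_s, and let f: X = Bl₀(ℂ^{n+1}) → ℂ^{n+1} be the blowup of the origin with exceptional divisor E. With 𝓟_j = 𝓘'_{d_j} + O_X((d₁−d_{j+1})E) for 1 ≤ j ≤ s−1 and 𝓘' the ideal of the strict transform of the cone over Z, one has I·O_X = O_X(−d₁E)·(𝓟₁ ∩ ⋯ ∩ 𝓟_{s−1} ∩ 𝓘'). -/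
open MvPolynomial

noncomputable section

/-- In the chart, `I'_d` is the ideal generated by the dehomogenizations
`H(…,1,…)` (setting `x_m = 1`) of the degree-`d` elements `H` of `I`. -/
def chartDehom (n : ℕ) (m : Fin (n + 1))
    (I : Ideal (MvPolynomial (Fin (n + 1)) ℂ)) (d : ℕ) :
    Ideal (MvPolynomial (Fin (n + 1)) ℂ) :=
  Ideal.span ((fun f => aeval
      (fun i : Fin (n + 1) =>
        if i = m then (1 : MvPolynomial (Fin (n + 1)) ℂ) else X i) f) ''
    {f | f ∈ I ∧ f.IsHomogeneous d})


noncomputable section AuxiliaryLemmas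

section IdealHelpers
variable {R : Type*} [CommRing R]
lemma idealSum_le {t : Finset ι} {F : ι → Ideal R} {K : Ideal R}
    (h : ∀ i ∈ t, F i ≤ K) : ∑ i ∈ t, F i ≤ K := by
  classical
  induction t using Finset.induction with
  | empty => simp
  | insert _ _ hx ih =>
    rw [Finset.sum_insert hx]
    exact sup_le (h _ (Finset.mem_insert_self _ _))
      (ih fun i hi => h i (Finset.mem_insert_of_mem hi))

lemma le_idealSum {t : Finset ι} {F : ι → Ideal R} {i : ι} (hi : i ∈ t) :
    F i ≤ ∑ j ∈ t, F j :=
  Finset.single_le_sum (fun j _ => bot_le) hi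

lemma satPow {A : Ideal R} {z : R} (hA : ∀ h, z * h ∈ A → h ∈ A) :
    ∀ (t : ℕ) (h : R), z ^ t * h ∈ A → h ∈ A := by
  intro t
  induction t with
  | zero => intro h hh; simpa using hh
  | succ t ih =>
    intro h hh
    have : z ^ t * (z * h) ∈ A := by
      have : z ^ (t + 1) * h = z ^ t * (z * h) := by ring
      rwa [this] at hh
    exact hA h (ih _ this)

lemma colonLemma {A : Ideal R} {z : R} (hA : ∀ h, z * h ∈ A → h ∈ A)
    {t c : ℕ} (htc : t ≤ c) {h : R} (hh : z ^ t * h ∈ A + Ideal.span {z ^ c}) :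
    h ∈ A + Ideal.span {z ^ (c - t)} := by
  rw [Submodule.add_eq_sup, Submodule.mem_sup] at hh
  obtain ⟨α, hα, γ, hγ, hsum⟩ := hh
  rw [Ideal.mem_span_singleton'] at hγ
  obtain ⟨β, rfl⟩ := hγ
  have hz : (z : R) ^ c = z ^ t * z ^ (c - t) := by
    rw [← pow_add, Nat.add_sub_cancel' htc]
  have heq : z ^ t * (h - β * z ^ (c - t)) = α := by
    rw [hz] at hsum; linear_combination -hsum
  have h2 : h - β * z ^ (c - t) ∈ A := satPow hA t _ (heq ▸ hα)
  rw [Submodule.add_eq_sup, Submodule.mem_sup]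
  exact ⟨_, h2, β * z ^ (c - t), Ideal.mem_span_singleton'.mpr ⟨β, rfl⟩, by ring⟩


lemma easyLemma (z : R) (s : ℕ) (Q : ℕ → Ideal R) (e : ℕ → ℕ)
    (hmono : ∀ i j, i ≤ j → j < s → e i ≤ e j) :
    ∑ i ∈ Finset.range s, Ideal.span {z ^ e i} * Q i ≤
      ((Finset.Ico 1 s).inf fun j =>
          (∑ i ∈ Finset.range j, Q i) + Ideal.span {z ^ e j}) ⊓
        ∑ i ∈ Finset.range s, Q i := by
  apply le_inf
  · apply Finset.le_inf
    intro j hj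
    obtain ⟨hj1, hjs⟩ := Finset.mem_Ico.mp hj
    apply idealSum_le
    intro i hi
    have his := Finset.mem_range.mp hi
    rcases lt_or_ge i j with hij | hij
    · calc Ideal.span {z ^ e i} * Q i ≤ Q i := Ideal.mul_le_right
        _ ≤ ∑ k ∈ Finset.range j, Q k := le_idealSum (Finset.mem_range.mpr hij)
        _ ≤ _ := le_sup_left
    · calc Ideal.span {z ^ e i} * Q i ≤ Ideal.span {z ^ e i} := Ideal.mul_le_left
        _ ≤ Ideal.span {z ^ e j} := by
            rw [Ideal.span_singleton_le_span_singleton]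
            exact pow_dvd_pow z (hmono j i hij his)
        _ ≤ _ := le_sup_right
  · apply idealSum_le
    intro i hi
    exact Ideal.mul_le_right.trans (le_idealSum hi)


lemma hardLemma (z : R) :
    ∀ (s : ℕ) (Q : ℕ → Ideal R) (e : ℕ → ℕ), e 0 = 0 →
      (∀ i j, i ≤ j → j < s → e i ≤ e j) →
      (∀ k, 0 < k → k ≤ s → ∀ h, z * h ∈ ∑ i ∈ Finset.range k, Q i →
        h ∈ ∑ i ∈ Finset.range k, Q i) →
      ((Finset.Ico 1 s).inf fun j =>
          (∑ i ∈ Finset.range j, Q i) + Ideal.span {z ^ e j}) ⊓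
        (∑ i ∈ Finset.range s, Q i) ≤
      ∑ i ∈ Finset.range s, Ideal.span {z ^ e i} * Q i := by
  intro s
  induction s with
  | zero => intro Q e _ _ _; simp
  | succ s ih =>
    intro Q e he0 hmono hsat
    rcases Nat.eq_zero_or_pos s with rfl | hs
    · simp [Finset.Ico_self, he0]
    · intro x hx
      rw [Submodule.mem_inf] at hx
      obtain ⟨hx1, hx2⟩ := hx
      have hP : ∀ j, 1 ≤ j → j < s + 1 →
          x ∈ (∑ i ∈ Finset.range j, Q i) + Ideal.span {z ^ e j} := by
        intro j h1 h2
        have hle : ((Finset.Ico 1 (s + 1)).inf fun j =>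
            (∑ i ∈ Finset.range j, Q i) + Ideal.span {z ^ e j}) ≤
            (∑ i ∈ Finset.range j, Q i) + Ideal.span {z ^ e j} :=
          Finset.inf_le (Finset.mem_Ico.mpr ⟨h1, h2⟩)
        exact hle hx1
      -- peel off the first component
      have h1 := hP 1 le_rfl (by omega)
      rw [Submodule.add_eq_sup, Submodule.mem_sup] at h1
      obtain ⟨a, ha, c, hc, hac⟩ := h1
      rw [Ideal.mem_span_singleton'] at hc
      obtain ⟨b, rfl⟩ := hc
      -- the shifted family
      set Q' : ℕ → Ideal R := fun j => if j = 0 then Q 0 + Q 1 else Q (j + 1) with hQ'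
      set e' : ℕ → ℕ := fun j => e (j + 1) - e 1 with he'
      have hA' : ∀ k, 1 ≤ k →
          ∑ i ∈ Finset.range k, Q' i = ∑ i ∈ Finset.range (k + 1), Q i := by
        intro k hk
        induction k with
        | zero => omega
        | succ k ihk =>
          rcases Nat.eq_zero_or_pos k with rfl | hk'
          · show ∑ i ∈ Finset.range 1, Q' i = ∑ i ∈ Finset.range 2, Q i
            rw [Finset.sum_range_one, Finset.sum_range_succ, Finset.sum_range_one]
            simp [hQ']
          · rw [Finset.sum_range_succ, Finset.sum_range_succ (n := k + 1), ihk hk']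
            congr 1
            simp [hQ', Nat.pos_iff_ne_zero.mp hk']
      have haA : ∀ k, 1 ≤ k → k ≤ s + 1 → a ∈ ∑ i ∈ Finset.range k, Q i := by
        intro k h1 h2
        exact (le_idealSum (F := Q) (t := Finset.range k)
          (Finset.mem_range.mpr (by omega)) : Q 0 ≤ _) (by simpa using ha)
      -- b is in the shifted total sum
      have hcA : b * z ^ e 1 ∈ ∑ i ∈ Finset.range (s + 1), Q i := by
        have hxa : b * z ^ e 1 = x - a := by rw [← hac]; ring
        rw [hxa]
        exact sub_mem hx2 (haA (s + 1) (by omega) le_rfl)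
      have hbA : b ∈ ∑ i ∈ Finset.range s, Q' i := by
        rw [hA' s hs]
        exact satPow (hsat (s + 1) (by omega) le_rfl) (e 1) b (by rwa [mul_comm])
      -- b is in the shifted intersection
      have hbinf : b ∈ (Finset.Ico 1 s).inf fun j =>
          (∑ i ∈ Finset.range j, Q' i) + Ideal.span {z ^ e' j} := by
        rw [Submodule.mem_finsetInf]
        intro j hj
        obtain ⟨hj1, hjs⟩ := Finset.mem_Ico.mp hj
        show b ∈ (∑ i ∈ Finset.range j, Q' i) + Ideal.span {z ^ e' j}
        rw [hA' j hj1]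
        have hsat' : ∀ h, z * h ∈ ∑ i ∈ Finset.range (j + 1), Q i →
            h ∈ ∑ i ∈ Finset.range (j + 1), Q i := hsat (j + 1) (by omega) (by omega)
        have hcP : z ^ e 1 * b ∈
            (∑ i ∈ Finset.range (j + 1), Q i) + Ideal.span {z ^ e (j + 1)} := by
          have hxa : z ^ e 1 * b = x - a := by rw [← hac]; ring
          rw [hxa]
          exact sub_mem (hP (j + 1) (by omega) (by omega))
            (Submodule.mem_sup_left (haA (j + 1) (by omega) (by omega)))
        exact colonLemma hsat' (hmono 1 (j + 1) (by omega) (by omega)) hcP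
      have hmono' : ∀ i j, i ≤ j → j < s → e' i ≤ e' j := by
        intro i j hij hjs'
        exact Nat.sub_le_sub_right (hmono (i + 1) (j + 1) (by omega) (by omega)) _
      have hsat'' : ∀ k, 0 < k → k ≤ s → ∀ h, z * h ∈ ∑ i ∈ Finset.range k, Q' i →
          h ∈ ∑ i ∈ Finset.range k, Q' i := by
        intro k hk0 hks h hh
        rw [hA' k hk0] at hh ⊢
        exact hsat (k + 1) (by omega) (by omega) h hh
      have hb := ih Q' e' (by simp [he']) hmono' hsat''
        (Submodule.mem_inf.mpr ⟨hbinf, hbA⟩)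
      -- reassemble
      have hQ0T : Q 0 ≤ ∑ i ∈ Finset.range (s + 1), Ideal.span {z ^ e i} * Q i := by
        have h0 : Ideal.span {z ^ e 0} * Q 0 ≤
            ∑ i ∈ Finset.range (s + 1), Ideal.span {z ^ e i} * Q i :=
          le_idealSum (i := 0) (t := Finset.range (s + 1)) (F := fun i => Ideal.span {z ^ e i} * Q i) (Finset.mem_range.mpr (by omega))
        rwa [he0, pow_zero, Ideal.span_singleton_one, Ideal.top_mul] at h0
      have haT : a ∈ ∑ i ∈ Finset.range (s + 1), Ideal.span {z ^ e i} * Q i :=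
        hQ0T (by simpa using ha)
      have hmulT : Ideal.span {z ^ e 1} *
          (∑ i ∈ Finset.range s, Ideal.span {z ^ e' i} * Q' i) ≤
          ∑ i ∈ Finset.range (s + 1), Ideal.span {z ^ e i} * Q i := by
        rw [Finset.mul_sum]
        apply idealSum_le
        intro i hi
        have his := Finset.mem_range.mp hi
        rcases Nat.eq_zero_or_pos i with rfl | hi'
        · have he'0 : e' 0 = 0 := by simp [he']
          show Ideal.span {z ^ e 1} * (Ideal.span {z ^ e' 0} * Q' 0) ≤ _
          have hQ'0 : Q' 0 = Q 0 + Q 1 := by simp [hQ']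
          rw [he'0, pow_zero, Ideal.span_singleton_one, Ideal.top_mul, hQ'0,
            mul_add, Submodule.add_eq_sup]
          apply sup_le
          · exact Ideal.mul_le_right.trans hQ0T
          · exact le_idealSum (i := 1) (t := Finset.range (s + 1)) (F := fun i => Ideal.span {z ^ e i} * Q i) (Finset.mem_range.mpr (by omega))
        · have hQi : Q' i = Q (i + 1) := by simp [hQ', Nat.pos_iff_ne_zero.mp hi']
          show Ideal.span {z ^ e 1} * (Ideal.span {z ^ e' i} * Q' i) ≤ _
          have he'i : e' i = e (i + 1) - e 1 := rfl
          rw [hQi, he'i, ← mul_assoc, Ideal.span_singleton_mul_span_singleton, ← pow_add,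
            Nat.add_sub_cancel' (hmono 1 (i + 1) (by omega : 1 ≤ i + 1)
              (by omega : i + 1 < s + 1))]
          exact le_idealSum (i := i + 1) (t := Finset.range (s + 1)) (F := fun i => Ideal.span {z ^ e i} * Q i) (Finset.mem_range.mpr (by omega))
      rw [← hac]
      refine add_mem haT (hmulT ?_)
      rw [mul_comm b (z ^ e 1)]
      exact Ideal.mul_mem_mul (Ideal.subset_span rfl) hb


lemma coreLemma (z : R) (s : ℕ) (Q : ℕ → Ideal R) (e : ℕ → ℕ) (he0 : e 0 = 0)
    (hmono : ∀ i j, i ≤ j → j < s → e i ≤ e j)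
    (hsat : ∀ k, 0 < k → k ≤ s → ∀ h, z * h ∈ ∑ i ∈ Finset.range k, Q i →
      h ∈ ∑ i ∈ Finset.range k, Q i) :
    ∑ i ∈ Finset.range s, Ideal.span {z ^ e i} * Q i =
      ((Finset.Ico 1 s).inf fun j =>
          (∑ i ∈ Finset.range j, Q i) + Ideal.span {z ^ e j}) ⊓
        ∑ i ∈ Finset.range s, Q i :=
  le_antisymm (easyLemma z s Q e hmono) (hardLemma z s Q e he0 hmono hsat)

end IdealHelpers


lemma blow_of_homogeneous {n : ℕ} (m : Fin (n + 1)) {d : ℕ}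
    {f : MvPolynomial (Fin (n + 1)) ℂ} (hf : f.IsHomogeneous d) :
    aeval (fun i : Fin (n + 1) =>
        if i = m then (X m : MvPolynomial (Fin (n + 1)) ℂ) else X m * X i) f
      = X m ^ d * aeval (fun i : Fin (n + 1) =>
        if i = m then (1 : MvPolynomial (Fin (n + 1)) ℂ) else X i) f := by
  conv_lhs => rw [f.as_sum]
  conv_rhs => rw [f.as_sum]
  rw [map_sum, map_sum, Finset.mul_sum]
  apply Finset.sum_congr rfl
  intro α hα
  have hd : ∑ i ∈ α.support, α i = d := by
    have h1 := hf (MvPolynomial.mem_support_iff.mp hα)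
    have h2 : α.degree = d := by rw [Finsupp.degree_eq_weight_one]; exact h1
    rw [← h2]; rfl
  rw [aeval_monomial, aeval_monomial]
  have hprod : (α.prod fun i k =>
      (if i = m then (X m : MvPolynomial (Fin (n + 1)) ℂ) else X m * X i) ^ k)
      = X m ^ d * (α.prod fun i k =>
        (if i = m then (1 : MvPolynomial (Fin (n + 1)) ℂ) else X i) ^ k) := by
    rw [Finsupp.prod, Finsupp.prod]
    have : ∀ i ∈ α.support,
        (if i = m then (X m : MvPolynomial (Fin (n + 1)) ℂ) else X m * X i) ^ α i
          = X m ^ α i * (if i = m then (1 : MvPolynomial (Fin (n + 1)) ℂ) else X i) ^ α i := by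
      intro i _
      by_cases hi : i = m <;> simp [hi, mul_pow]
    rw [Finset.prod_congr rfl this, Finset.prod_mul_distrib,
      Finset.prod_pow_eq_pow_sum, hd]
  rw [hprod]
  ring



noncomputable def rnm (n : ℕ) (m : Fin (n + 1)) :
    MvPolynomial {i : Fin (n + 1) // i ≠ m} ℂ →ₐ[ℂ] MvPolynomial (Fin (n + 1)) ℂ :=
  rename Subtype.val

noncomputable def blowE (n : ℕ) (m : Fin (n + 1)) :
    MvPolynomial (Fin (n + 1)) ℂ ≃ₐ[ℂ] Polynomial (MvPolynomial (Fin n) ℂ) :=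
  (renameEquiv ℂ (Equiv.swap m 0)).trans (finSuccEquiv ℂ n)

lemma blowE_X_m (n : ℕ) (m : Fin (n + 1)) : blowE n m (X m) = Polynomial.X := by
  simp [blowE, renameEquiv_apply, Equiv.swap_apply_left, finSuccEquiv_X_zero]

lemma blowE_rnm (n : ℕ) (m : Fin (n + 1)) (q₀ : MvPolynomial {i : Fin (n + 1) // i ≠ m} ℂ) :
    blowE n m (rnm n m q₀) ∈ Set.range (Polynomial.C (R := MvPolynomial (Fin n) ℂ)) := by
  have hg : ∀ (j : {i : Fin (n + 1) // i ≠ m}), Equiv.swap m 0 j.val ≠ 0 := by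
    intro j
    have h := (Equiv.swap m 0).injective.ne j.2
    rwa [Equiv.swap_apply_left] at h
  have hcomp : ((blowE n m).toAlgHom.comp (rnm n m)) =
      (Polynomial.CAlgHom (R := ℂ)).comp
        (rename fun j : {i : Fin (n + 1) // i ≠ m} => (Equiv.swap m 0 j.val).pred (hg j)) := by
    apply MvPolynomial.algHom_ext
    intro j
    simp only [AlgHom.comp_apply, rnm, rename_X]
    show blowE n m (X j.val) = Polynomial.CAlgHom (X ((Equiv.swap m 0 j.val).pred (hg j)))
    obtain ⟨l, hl⟩ : ∃ l : Fin n, Equiv.swap m 0 j.val = l.succ :=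
      ⟨(Equiv.swap m 0 j.val).pred (hg j), (Fin.succ_pred _ (hg j)).symm⟩
    have : (Equiv.swap m 0 j.val).pred (hg j) = l := by
      simp [hl, Fin.pred_succ]
    rw [this]
    simp [blowE, renameEquiv_apply, hl, finSuccEquiv_X_succ, Polynomial.CAlgHom]
  have h1 : blowE n m (rnm n m q₀) = ((blowE n m).toAlgHom.comp (rnm n m)) q₀ := rfl
  rw [h1, hcomp]
  exact ⟨_, rfl⟩

lemma span_sat {n : ℕ} (m : Fin (n + 1)) (S : Set (MvPolynomial (Fin (n + 1)) ℂ))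
    (hS : S ⊆ Set.range (rnm n m)) (p : MvPolynomial (Fin (n + 1)) ℂ)
    (hp : X m * p ∈ Ideal.span S) : p ∈ Ideal.span S := by
  set E : MvPolynomial (Fin (n + 1)) ℂ ≃+* Polynomial (MvPolynomial (Fin n) ℂ) :=
    (blowE n m).toRingEquiv with hE
  have hEm : E (X m) = Polynomial.X := blowE_X_m n m
  have key : ∀ q, q ∈ Ideal.span S ↔ E q ∈ Ideal.span (⇑E '' S) := by
    intro q
    constructor
    · intro h
      have h2 := Ideal.mem_map_of_mem E.toRingHom h
      rwa [Ideal.map_span] at h2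
    · intro h
      have h2 := Ideal.mem_map_of_mem E.symm.toRingHom h
      rw [Ideal.map_span, ← Set.image_comp] at h2
      simp only [Function.comp_def, RingEquiv.symm_apply_apply, Set.image_id'] at h2
      simpa using h2
  -- the image generators are constants
  have hT : ⇑E '' S ⊆ Set.range (Polynomial.C (R := MvPolynomial (Fin n) ℂ)) := by
    rintro _ ⟨q, hq, rfl⟩
    obtain ⟨q₀, rfl⟩ := hS hq
    exact blowE_rnm n m q₀
  set S₀ : Set (MvPolynomial (Fin n) ℂ) := ⇑(Polynomial.C) ⁻¹' (⇑E '' S) with hS₀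
  have hCT : ⇑(Polynomial.C) '' S₀ = ⇑E '' S := Set.image_preimage_eq_of_subset hT
  have hXp : Polynomial.X * E p ∈ Ideal.span (⇑E '' S) := by
    have := (key _).mp hp
    rwa [map_mul, hEm] at this
  rw [← hCT, ← Ideal.map_span] at hXp
  have hcoeff := Ideal.mem_map_C_iff.mp hXp
  have hEp : E p ∈ Ideal.map Polynomial.C (Ideal.span S₀) :=
    Ideal.mem_map_C_iff.mpr fun k => by
      simpa [Polynomial.coeff_X_mul] using hcoeff (k + 1)
  rw [Ideal.map_span, hCT] at hEp
  exact (key p).mpr hEp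




lemma dehom_mem_range (n : ℕ) (m : Fin (n + 1)) (f : MvPolynomial (Fin (n + 1)) ℂ) :
    aeval (fun i : Fin (n + 1) =>
        if i = m then (1 : MvPolynomial (Fin (n + 1)) ℂ) else X i) f
      ∈ Set.range (rnm n m) := by
  set w : Fin (n + 1) → MvPolynomial {i : Fin (n + 1) // i ≠ m} ℂ :=
    fun i => if h : i = m then 1 else X ⟨i, h⟩ with hw
  have hcomp : (rnm n m).comp (aeval w) =
      aeval (fun i : Fin (n + 1) =>
        if i = m then (1 : MvPolynomial (Fin (n + 1)) ℂ) else X i) := by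
    apply MvPolynomial.algHom_ext
    intro i
    by_cases hi : i = m <;> simp [hw, hi, rnm]
  exact ⟨aeval w f, by rw [← hcomp]; rfl⟩

lemma sum_span {R : Type*} [CommRing R] {ι : Type*} (t : Finset ι) (T : ι → Set R) :
    ∑ i ∈ t, Ideal.span (T i) = Ideal.span (⋃ i ∈ t, T i) := by
  classical
  induction t using Finset.induction with
  | empty => simp
  | insert _ _ hx ih =>
    rw [Finset.sum_insert hx, Finset.set_biUnion_insert, Ideal.span_union, ih]
    rfl

lemma map_sum_ideals {R S : Type*} [CommRing R] [CommRing S] (f : R →+* S) {ι : Type*}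
    (t : Finset ι) (F : ι → Ideal R) :
    Ideal.map f (∑ i ∈ t, F i) = ∑ i ∈ t, Ideal.map f (F i) := by
  classical
  induction t using Finset.induction with
  | empty => simpa using Ideal.map_bot
  | insert _ _ hx ih =>
    rw [Finset.sum_insert hx, Finset.sum_insert hx, Submodule.add_eq_sup,
      Submodule.add_eq_sup, Ideal.map_sup, ih]

lemma map_piece (n : ℕ) (m : Fin (n + 1)) (I : Ideal (MvPolynomial (Fin (n + 1)) ℂ)) (d : ℕ) :
    Ideal.map (blowChart n m) (pieceSpanN n I d)
      = Ideal.span {(X m : MvPolynomial (Fin (n + 1)) ℂ) ^ d} * chartDehom n m I d := by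
  rw [pieceSpanN, Ideal.map_span]
  have himg : ⇑(blowChart n m) '' {f | f ∈ I ∧ f.IsHomogeneous d}
      = (fun p => (X m : MvPolynomial (Fin (n + 1)) ℂ) ^ d * p) ''
          ((fun f => aeval (fun i : Fin (n + 1) =>
            if i = m then (1 : MvPolynomial (Fin (n + 1)) ℂ) else X i) f) ''
            {f | f ∈ I ∧ f.IsHomogeneous d}) := by
    rw [← Set.image_comp]
    apply Set.image_congr
    intro f hf
    exact blow_of_homogeneous m hf.2
  rw [himg, chartDehom, ← Set.singleton_mul, ← Ideal.span_mul_span']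


lemma chart_sum_sat (n : ℕ) (m : Fin (n + 1)) (I : Ideal (MvPolynomial (Fin (n + 1)) ℂ))
    (t : Finset ℕ) (dv : ℕ → ℕ) (h : MvPolynomial (Fin (n + 1)) ℂ)
    (hh : X m * h ∈ ∑ i ∈ t, chartDehom n m I (dv i)) :
    h ∈ ∑ i ∈ t, chartDehom n m I (dv i) := by
  have hrw : ∑ i ∈ t, chartDehom n m I (dv i)
      = Ideal.span (⋃ i ∈ t, (fun f => aeval
          (fun i : Fin (n + 1) =>
            if i = m then (1 : MvPolynomial (Fin (n + 1)) ℂ) else X i) f) ''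
          {f | f ∈ I ∧ f.IsHomogeneous (dv i)}) := by
    rw [← sum_span]; rfl
  rw [hrw] at hh ⊢
  apply span_sat m _ _ h hh
  intro x hx
  simp only [Set.mem_iUnion] at hx
  obtain ⟨i, _, f, _, rfl⟩ := hx
  exact dehom_mem_range n m f

end AuxiliaryLemmas

/-- **Decomposition of the pullback ideal on the blowup of the origin,**
verified on each standard chart.  Let `I ⊆ ℂ[x₀,…,x_n]` be a saturated
homogeneous ideal generated by forms of degrees `d₁ < ⋯ < d_s`.  On the chart
the identity `I·O_X = O_X(−d₁E)·(𝓟₁ ∩ ⋯ ∩ 𝓟_{s−1} ∩ 𝓘')` reads: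
`z^{d₁}I'_{d₁} + ⋯ + z^{d_s}I'_{d_s}
  = z^{d₁}·( ⋂_{1≤j≤s−1} (I'_{d₁}+⋯+I'_{d_j}+(z^{d_{j+1}−d₁}))
      ∩ (I'_{d₁}+⋯+I'_{d_s}) )`. -/
theorem blowup_pullback_decomposition (n s : ℕ) (hs : 0 < s)
    (I : Ideal (MvPolynomial (Fin (n + 1)) ℂ))
    (hIh : I = Ideal.span {f | f ∈ I ∧ ∃ k, f.IsHomogeneous k})
    (hsat : satN n I = I)
    (dd : ℕ → ℕ) (hmono : ∀ i j, i < j → j < s → dd i < dd j)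
    (hgen : I = ∑ i ∈ Finset.range s, pieceSpanN n I (dd i))
    (m : Fin (n + 1)) :
    Ideal.map (blowChart n m) I
      = Ideal.span {X m ^ dd 0} *
          (((Finset.Ico 1 s).inf fun j =>
              (∑ i ∈ Finset.range j, chartDehom n m I (dd i))
                + Ideal.span {X m ^ (dd j - dd 0)})
            ⊓ ∑ i ∈ Finset.range s, chartDehom n m I (dd i)) := by
  have hz0 : ∀ i, i < s → dd 0 ≤ dd i := by
    intro i hi
    rcases Nat.eq_zero_or_pos i with rfl | h
    · exact le_rfl
    · exact (hmono 0 i h hi).le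
  conv_lhs => rw [hgen]
  rw [map_sum_ideals]
  have hterm : ∀ i ∈ Finset.range s,
      Ideal.map (blowChart n m) (pieceSpanN n I (dd i))
        = Ideal.span {(X m : MvPolynomial (Fin (n + 1)) ℂ) ^ dd 0} *
            (Ideal.span {(X m : MvPolynomial (Fin (n + 1)) ℂ) ^ (dd i - dd 0)} *
              chartDehom n m I (dd i)) := by
    intro i hi
    rw [map_piece, ← mul_assoc, Ideal.span_singleton_mul_span_singleton, ← pow_add,
      Nat.add_sub_cancel' (hz0 i (Finset.mem_range.mp hi))]
  rw [Finset.sum_congr rfl hterm, ← Finset.mul_sum]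
  congr 1
  have hmono' : ∀ i j, i ≤ j → j < s → dd i - dd 0 ≤ dd j - dd 0 := by
    intro i j hij hjs
    rcases Nat.lt_or_ge i j with h | h
    · exact Nat.sub_le_sub_right (hmono i j h hjs).le _
    · have : i = j := le_antisymm hij h
      rw [this]
  have hsat' : ∀ k, 0 < k → k ≤ s → ∀ h,
      (X m : MvPolynomial (Fin (n + 1)) ℂ) * h ∈
        ∑ i ∈ Finset.range k, chartDehom n m I (dd i) →
      h ∈ ∑ i ∈ Finset.range k, chartDehom n m I (dd i) := by
    intro k _ _ h hh
    exact chart_sum_sat n m I (Finset.range k) dd h hh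
  exact coreLemma (X m) s (fun i => chartDehom n m I (dd i)) (fun i => dd i - dd 0)
    (Nat.sub_self _) hmono' hsat'

end
end
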